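/- For every ε ∈ (0,1), the mixing times t_mix(Q;ε) := min{t ≥ 0 : d_Q(t) ≤ ε} and t_mix(K;ε) := min{t ≥ 0 : d_K(t) ≤ ε} are both finite, and they differ by at most one step: |t_mix(Q;ε) − t_mix(K;ε)| ≤ 1. -/

import Mathlib

open Finset
set_option linter.unusedSectionVars false
set_option maxHeartbeats 1000000

variable (G X : Type) [Group G] [Fintype G] [DecidableEq G]
  [Fintype X] [DecidableEq X] [Nonempty X] [MulAction G X]

noncomputable section

/-- The fixed-point set `X_g = {x ∈ X : g • x = x}` of a group element. -/
def fixedPts (g : G) : Finset X := Finset.univ.filter fun x => g • x = x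

/-- The stabilizer `G_x = {g ∈ G : g • x = x}` of a point, as a finset. -/
def stab (x : X) : Finset G := Finset.univ.filter fun g => g • x = x

/-- `G* = {g ∈ G : X_g ≠ ∅}`. -/
def Gstar : Finset G := Finset.univ.filter fun g => (fixedPts G X g).Nonempty

/-- The dual Burnside kernel `Q(g,h) = ∑_{x ∈ X_g ∩ X_h} 1/(|X_g|·|G_x|)`. -/
def Q (g h : G) : ℝ :=
  ∑ x ∈ fixedPts G X g ∩ fixedPts G X h,
    1 / (((fixedPts G X g).card : ℝ) * ((stab G X x).card : ℝ))

/-- The primal Burnside kernel `K(x,y) = ∑_{g ∈ G_x ∩ G_y} 1/(|G_x|·|X_g|)`. -/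
def K (x y : X) : ℝ :=
  ∑ g ∈ stab G X x ∩ stab G X y,
    1 / (((stab G X x).card : ℝ) * ((fixedPts G X g).card : ℝ))

/-- The forward leg `A(g,x) = 1_{x ∈ X_g}/|X_g|`. -/
def A (g : G) (x : X) : ℝ :=
  if x ∈ fixedPts G X g then 1 / ((fixedPts G X g).card : ℝ) else 0

/-- The backward leg `B(x,h) = 1_{h ∈ G_x}/|G_x|`. -/
def B (x : X) (h : G) : ℝ :=
  if h ∈ stab G X x then 1 / ((stab G X x).card : ℝ) else 0


/-- `z = |X/G|`, the number of `G`-orbits on `X`. -/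
def numOrbits : ℕ := Nat.card (Quotient (MulAction.orbitRel G X))

/-- The dual stationary law `π_Q(g) = |X_g| / (z·|G|)`. -/
def piQ (g : G) : ℝ :=
  ((fixedPts G X g).card : ℝ) / ((numOrbits G X : ℝ) * (Fintype.card G : ℝ))

/-- The primal stationary law `π_K(x) = |G_x| / (z·|G|)`. -/
def piK (x : X) : ℝ :=
  ((stab G X x).card : ℝ) / ((numOrbits G X : ℝ) * (Fintype.card G : ℝ))

/-- The dual kernel as a matrix indexed by `G*`. -/
def Qmat : Matrix (Gstar G X) (Gstar G X) ℝ := fun g h => Q G X g.1 h.1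

/-- The primal kernel as a matrix indexed by `X`. -/
def Kmat : Matrix X X ℝ := fun x y => K G X x y

/-- Total variation distance of `Q^t(g,·)` from `π_Q`. -/
def tvQ (t : ℕ) (g : Gstar G X) : ℝ :=
  (1 / 2) * ∑ h : Gstar G X, |(Qmat G X ^ t) g h - piQ G X h.1|

/-- Total variation distance of `K^t(x,·)` from `π_K`. -/
def tvK (t : ℕ) (x : X) : ℝ :=
  (1 / 2) * ∑ y : X, |(Kmat G X ^ t) x y - piK G X y|

/-- Worst-case total variation distance for the dual chain: `d_Q(t) = max_{g∈G*} tvQ t g`. -/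
def dQ (t : ℕ) : ℝ := ⨆ g : Gstar G X, tvQ G X t g

/-- Worst-case total variation distance for the primal chain: `d_K(t) = max_{x∈X} tvK t x`. -/
def dK (t : ℕ) : ℝ := ⨆ x : X, tvK G X t x



-- ==================== auxiliary generic lemmas ====================

lemma contract_aux {m n : Type} [Fintype m] [Fintype n] (P : Matrix m n ℝ)
    (h0 : ∀ i j, 0 ≤ P i j) (h1 : ∀ i, ∑ j, P i j = 1) (v : m → ℝ) :
    ∑ j, |∑ i, v i * P i j| ≤ ∑ i, |v i| := by
  calc ∑ j, |∑ i, v i * P i j| ≤ ∑ j, ∑ i, |v i| * P i j := by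
        refine Finset.sum_le_sum fun j _ => (Finset.abs_sum_le_sum_abs _ _).trans
          (Finset.sum_le_sum fun i _ => ?_)
        rw [abs_mul, abs_of_nonneg (h0 i j)]
    _ = ∑ i, |v i| * ∑ j, P i j := by rw [Finset.sum_comm]; simp [Finset.mul_sum]
    _ ≤ ∑ i, |v i| := by simp [h1]

lemma mix_aux {m n : Type} [Fintype m] [Fintype n] (μ : m → ℝ)
    (hμ0 : ∀ i, 0 ≤ μ i) (hμ1 : ∑ i, μ i = 1)
    (R : Matrix m n ℝ) (π : n → ℝ) (d : ℝ)
    (hd : ∀ i, ∑ j, |R i j - π j| ≤ d) :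
    ∑ j, |(∑ i, μ i * R i j) - π j| ≤ d := by
  have key : ∀ j, (∑ i, μ i * R i j) - π j = ∑ i, μ i * (R i j - π j) := by
    intro j
    rw [Finset.sum_congr rfl (fun i _ => mul_sub (μ i) (R i j) (π j)),
      Finset.sum_sub_distrib, ← Finset.sum_mul, hμ1, one_mul]
  calc ∑ j, |(∑ i, μ i * R i j) - π j| ≤ ∑ j, ∑ i, μ i * |R i j - π j| := by
        refine Finset.sum_le_sum fun j _ => ?_
        rw [key j]
        refine (Finset.abs_sum_le_sum_abs _ _).trans (Finset.sum_le_sum fun i _ => ?_)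
        rw [abs_mul, abs_of_nonneg (hμ0 i)]
    _ = ∑ i, μ i * ∑ j, |R i j - π j| := by rw [Finset.sum_comm]; simp [Finset.mul_sum]
    _ ≤ ∑ i, μ i * d := Finset.sum_le_sum fun i _ =>
        mul_le_mul_of_nonneg_left (hd i) (hμ0 i)
    _ = d := by rw [← Finset.sum_mul, hμ1, one_mul]

lemma cancel_helper {a c : ℝ} (hc : c ≠ 0) : c / a * (1 / c) = 1 / a := by
  rw [mul_one_div, div_div, mul_comm a c, ← div_div, div_self hc]

lemma pow_factor_aux {m n : Type} [Fintype m] [Fintype n] [DecidableEq m] [DecidableEq n]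
    (A : Matrix m n ℝ) (B : Matrix n m ℝ) :
    ∀ t : ℕ, (A * B) ^ (t + 1) = A * ((B * A) ^ t * B)
  | 0 => by simp
  | (t + 1) => by
    rw [pow_succ, pow_factor_aux A B t, pow_succ]
    simp only [Matrix.mul_assoc]

-- ==================== basic membership / cardinality lemmas ====================

lemma mem_fixedPts' {g : G} {x : X} : x ∈ fixedPts G X g ↔ g • x = x := by
  simp [fixedPts]

lemma mem_stab' {g : G} {x : X} : g ∈ stab G X x ↔ g • x = x := by
  simp [stab]

lemma stab_fixed {g : G} {x : X} : g ∈ stab G X x ↔ x ∈ fixedPts G X g := by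
  simp [stab, fixedPts]

lemma stab_card_pos (x : X) : 0 < (stab G X x).card :=
  Finset.card_pos.2 ⟨1, (mem_stab' G X).2 (one_smul G x)⟩

lemma mem_Gstar_of_stab {g : G} {x : X} (h : g ∈ stab G X x) : g ∈ Gstar G X := by
  simp only [Gstar, Finset.mem_filter, Finset.mem_univ, true_and]
  exact ⟨x, (stab_fixed G X).1 h⟩

lemma one_mem_Gstar : (1 : G) ∈ Gstar G X :=
  mem_Gstar_of_stab G X ((mem_stab' G X).2 (one_smul G (Classical.arbitrary X)))

instance : Nonempty (Gstar G X) := ⟨⟨1, one_mem_Gstar G X⟩⟩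

lemma fixedPts_card_pos {g : G} (hg : g ∈ Gstar G X) : 0 < (fixedPts G X g).card := by
  simp only [Gstar, Finset.mem_filter] at hg
  exact Finset.card_pos.2 hg.2

-- ==================== the legs as matrices ====================

def Amat : Matrix (Gstar G X) X ℝ := fun g x => A G X g.1 x

def Bmat : Matrix X (Gstar G X) ℝ := fun x h => B G X x h.1

lemma A_nonneg (g : G) (x : X) : 0 ≤ A G X g x := by
  unfold A; split <;> positivity

lemma B_nonneg (x : X) (h : G) : 0 ≤ B G X x h := by
  unfold B; split <;> positivity

lemma B_eq_zero_of_not_gstar {x : X} {h : G} (hh : h ∉ Gstar G X) : B G X x h = 0 := by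
  unfold B
  rw [if_neg fun hmem => hh (mem_Gstar_of_stab G X hmem)]

lemma sum_gstar (f : G → ℝ) (hf : ∀ g, g ∉ Gstar G X → f g = 0) :
    ∑ g : Gstar G X, f g.1 = ∑ g : G, f g := by
  rw [Finset.sum_coe_sort (Gstar G X) f]
  exact Finset.sum_subset (Finset.subset_univ _) fun g _ hg => hf g hg

lemma A_row_sum {g : G} (hg : g ∈ Gstar G X) : ∑ x : X, A G X g x = 1 := by
  have hc : ((fixedPts G X g).card : ℝ) ≠ 0 := by
    exact_mod_cast (fixedPts_card_pos G X hg).ne'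
  unfold A
  rw [Finset.sum_ite_mem, Finset.univ_inter, Finset.sum_const, nsmul_eq_mul,
    mul_one_div, div_self hc]

lemma B_row_sum (x : X) : ∑ h : Gstar G X, B G X x h.1 = 1 := by
  have hc : ((stab G X x).card : ℝ) ≠ 0 := by
    exact_mod_cast (stab_card_pos G X x).ne'
  rw [sum_gstar G X _ fun h hh => B_eq_zero_of_not_gstar G X hh]
  unfold B
  rw [Finset.sum_ite_mem, Finset.univ_inter, Finset.sum_const, nsmul_eq_mul,
    mul_one_div, div_self hc]

-- ==================== factorizations ====================

lemma Kmat_eq : Kmat G X = Bmat G X * Amat G X := by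
  ext x y
  rw [Matrix.mul_apply]
  simp only [Bmat, Amat]
  rw [sum_gstar G X (fun h => B G X x h * A G X h y)
    (fun g hg => by show B G X x g * A G X g y = 0
                    rw [B_eq_zero_of_not_gstar G X hg, zero_mul])]
  show K G X x y = _
  unfold K
  calc ∑ g ∈ stab G X x ∩ stab G X y,
        1 / ((#(stab G X x) : ℝ) * (#(fixedPts G X g) : ℝ))
      = ∑ g ∈ stab G X x ∩ stab G X y, B G X x g * A G X g y := by
        refine Finset.sum_congr rfl fun g hg => ?_
        rw [Finset.mem_inter] at hg
        unfold A B
        rw [if_pos hg.1, if_pos ((stab_fixed G X).1 hg.2), div_mul_div_comm, one_mul]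
    _ = ∑ g : G, B G X x g * A G X g y := by
        refine Finset.sum_subset (Finset.subset_univ _) fun g _ hg => ?_
        rw [Finset.mem_inter] at hg
        unfold A B
        by_cases h1 : g ∈ stab G X x
        · rw [if_neg (fun h2 => hg ⟨h1, (stab_fixed G X).2 h2⟩), mul_zero]
        · rw [if_neg h1, zero_mul]

lemma Qmat_eq : Qmat G X = Amat G X * Bmat G X := by
  ext g h
  rw [Matrix.mul_apply]
  simp only [Amat, Bmat]
  show Q G X g.1 h.1 = _
  unfold Q
  calc ∑ x ∈ fixedPts G X g.1 ∩ fixedPts G X h.1,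
        1 / ((#(fixedPts G X g.1) : ℝ) * (#(stab G X x) : ℝ))
      = ∑ x ∈ fixedPts G X g.1 ∩ fixedPts G X h.1, A G X g.1 x * B G X x h.1 := by
        refine Finset.sum_congr rfl fun x hx => ?_
        rw [Finset.mem_inter] at hx
        unfold A B
        rw [if_pos hx.1, if_pos ((stab_fixed G X).2 hx.2), div_mul_div_comm, one_mul]
    _ = ∑ x : X, A G X g.1 x * B G X x h.1 := by
        refine Finset.sum_subset (Finset.subset_univ _) fun x _ hx => ?_
        rw [Finset.mem_inter] at hx
        unfold A B
        by_cases h1 : x ∈ fixedPts G X g.1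
        · rw [if_neg (fun h2 => hx ⟨h1, (stab_fixed G X).1 h2⟩), mul_zero]
        · rw [if_neg h1, zero_mul]

-- ==================== stationary measure facts ====================

lemma zG_pos : 0 < ((numOrbits G X : ℝ) * (Fintype.card G : ℝ)) := by
  have hne : Nonempty (Quotient (MulAction.orbitRel G X)) :=
    ⟨Quotient.mk (MulAction.orbitRel G X) (Classical.arbitrary X)⟩
  have h1 : 0 < numOrbits G X := Nat.card_pos
  have h2 : 0 < Fintype.card G := Fintype.card_pos
  positivity

lemma piK_nonneg (x : X) : 0 ≤ piK G X x := by
  unfold piK; positivity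

lemma piQ_A (x : X) : ∑ g : Gstar G X, piQ G X g.1 * Amat G X g x = piK G X x := by
  have step : ∑ g : Gstar G X, piQ G X g.1 * A G X g.1 x = ∑ g : G, piQ G X g * A G X g x := by
    refine sum_gstar G X (fun g => piQ G X g * A G X g x) fun g hg => ?_
    have hA : A G X g x = 0 := by
      unfold A
      rw [if_neg fun hx => hg (mem_Gstar_of_stab G X ((stab_fixed G X).2 hx))]
    show piQ G X g * A G X g x = 0
    rw [hA, mul_zero]
  show ∑ g : Gstar G X, piQ G X g.1 * A G X g.1 x = piK G X x
  rw [step, ← Finset.sum_subset (Finset.subset_univ (stab G X x))]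
  · have : ∀ g ∈ stab G X x, piQ G X g * A G X g x
        = 1 / ((numOrbits G X : ℝ) * (Fintype.card G : ℝ)) := by
      intro g hg
      have hx : x ∈ fixedPts G X g := (stab_fixed G X).1 hg
      have hc : ((fixedPts G X g).card : ℝ) ≠ 0 := by
        exact_mod_cast (Finset.card_pos.2 ⟨x, hx⟩).ne'
      unfold piQ A
      rw [if_pos hx]
      exact cancel_helper hc
    rw [Finset.sum_congr rfl this, Finset.sum_const, nsmul_eq_mul, mul_one_div]
    rfl
  · intro g _ hg
    have : A G X g x = 0 := by
      unfold A; rw [if_neg fun hx => hg ((stab_fixed G X).2 hx)]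
    rw [this, mul_zero]

lemma piK_B (h : Gstar G X) : ∑ x : X, piK G X x * Bmat G X x h = piQ G X h.1 := by
  show ∑ x : X, piK G X x * B G X x h.1 = piQ G X h.1
  rw [← Finset.sum_subset (Finset.subset_univ (fixedPts G X h.1))]
  · have : ∀ x ∈ fixedPts G X h.1, piK G X x * B G X x h.1
        = 1 / ((numOrbits G X : ℝ) * (Fintype.card G : ℝ)) := by
      intro x hx
      have hc : ((stab G X x).card : ℝ) ≠ 0 := by
        exact_mod_cast (stab_card_pos G X x).ne'
      unfold piK B
      rw [if_pos ((stab_fixed G X).2 hx)]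
      exact cancel_helper hc
    rw [Finset.sum_congr rfl this, Finset.sum_const, nsmul_eq_mul, mul_one_div]
    rfl
  · intro x _ hx
    have : B G X x h.1 = 0 := by
      unfold B; rw [if_neg fun hs => hx ((stab_fixed G X).1 hs)]
    rw [this, mul_zero]

lemma piK_sum : ∑ x : X, piK G X x = 1 := by
  letI : Fintype (Quotient (MulAction.orbitRel G X)) := Fintype.ofFinite _
  have hcount : ∑ x : X, (stab G X x).card = ∑ g : G, (fixedPts G X g).card := by
    unfold stab fixedPts
    simp only [Finset.card_filter]
    rw [Finset.sum_comm]
  have hburn : ∑ g : G, (fixedPts G X g).card = numOrbits G X * Fintype.card G := by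
    have hb := MulAction.sum_card_fixedBy_eq_card_orbits_mul_card_group G X
    have heq : ∀ g : G, Fintype.card (MulAction.fixedBy X g) = (fixedPts G X g).card := by
      intro g
      rw [← Set.toFinset_card]
      congr 1
      ext x
      rw [Set.mem_toFinset]
      simp [MulAction.fixedBy, fixedPts]
    rw [Finset.sum_congr rfl fun g _ => (heq g).symm, hb, numOrbits,
      Nat.card_eq_fintype_card]
  have hzg : ((numOrbits G X : ℝ) * (Fintype.card G : ℝ)) ≠ 0 := (zG_pos G X).ne'
  unfold piK
  rw [← Finset.sum_div, div_eq_one_iff_eq hzg, ← Nat.cast_sum, hcount, hburn,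
    Nat.cast_mul]

lemma piQ_sum : ∑ h : Gstar G X, piQ G X h.1 = 1 := by
  calc ∑ h : Gstar G X, piQ G X h.1
      = ∑ h : Gstar G X, ∑ x : X, piK G X x * Bmat G X x h :=
        Finset.sum_congr rfl fun h _ => (piK_B G X h).symm
    _ = ∑ x : X, ∑ h : Gstar G X, piK G X x * Bmat G X x h := Finset.sum_comm
    _ = ∑ x : X, piK G X x := by
        refine Finset.sum_congr rfl fun x _ => ?_
        have hb : ∑ h : Gstar G X, Bmat G X x h = 1 := B_row_sum G X x
        rw [← Finset.mul_sum, hb, mul_one]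
    _ = 1 := piK_sum G X

-- ==================== stochasticity ====================

lemma K_nonneg (x y : X) : 0 ≤ Kmat G X x y := by
  rw [Kmat_eq, Matrix.mul_apply]
  exact Finset.sum_nonneg fun h _ => mul_nonneg (B_nonneg G X x h.1) (A_nonneg G X h.1 y)

lemma K_row_sum (x : X) : ∑ y : X, Kmat G X x y = 1 := by
  simp only [Kmat_eq, Matrix.mul_apply]
  rw [Finset.sum_comm]
  calc ∑ h : Gstar G X, ∑ y : X, Bmat G X x h * Amat G X h y
      = ∑ h : Gstar G X, Bmat G X x h * ∑ y : X, Amat G X h y := by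
        simp [Finset.mul_sum]
    _ = ∑ h : Gstar G X, B G X x h.1 := by
        refine Finset.sum_congr rfl fun h _ => ?_
        rw [show ∑ y : X, Amat G X h y = 1 from A_row_sum G X h.2, mul_one]
        rfl
    _ = 1 := B_row_sum G X x

lemma Kpow_nonneg (t : ℕ) (x y : X) : 0 ≤ (Kmat G X ^ t) x y := by
  induction t generalizing x y with
  | zero => rw [pow_zero, Matrix.one_apply]; split <;> norm_num
  | succ t ih =>
    rw [pow_succ, Matrix.mul_apply]
    exact Finset.sum_nonneg fun z _ => mul_nonneg (ih x z) (K_nonneg G X z y)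

lemma Kpow_row_sum (t : ℕ) (x : X) : ∑ y : X, (Kmat G X ^ t) x y = 1 := by
  induction t generalizing x with
  | zero => simp [Matrix.one_apply]
  | succ t ih =>
    simp only [pow_succ, Matrix.mul_apply]
    rw [Finset.sum_comm]
    calc ∑ z : X, ∑ y : X, (Kmat G X ^ t) x z * Kmat G X z y
        = ∑ z : X, (Kmat G X ^ t) x z * ∑ y : X, Kmat G X z y := by simp [Finset.mul_sum]
      _ = ∑ z : X, (Kmat G X ^ t) x z := by
          refine Finset.sum_congr rfl fun z _ => by rw [K_row_sum G X z, mul_one]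
      _ = 1 := ih x

-- ==================== stationarity ====================

lemma piK_stat (y : X) : ∑ x : X, piK G X x * Kmat G X x y = piK G X y := by
  simp only [Kmat_eq, Matrix.mul_apply, Finset.mul_sum]
  rw [Finset.sum_comm]
  calc ∑ h : Gstar G X, ∑ x : X, piK G X x * (Bmat G X x h * Amat G X h y)
      = ∑ h : Gstar G X, (∑ x : X, piK G X x * Bmat G X x h) * Amat G X h y := by
        refine Finset.sum_congr rfl fun h _ => ?_
        rw [Finset.sum_mul]
        exact Finset.sum_congr rfl fun x _ => (mul_assoc _ _ _).symm
    _ = ∑ h : Gstar G X, piQ G X h.1 * Amat G X h y := by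
        refine Finset.sum_congr rfl fun h _ => by rw [piK_B G X h]
    _ = piK G X y := piQ_A G X y

lemma piQ_stat (h : Gstar G X) :
    ∑ g : Gstar G X, piQ G X g.1 * Qmat G X g h = piQ G X h.1 := by
  simp only [Qmat_eq, Matrix.mul_apply, Finset.mul_sum]
  rw [Finset.sum_comm]
  calc ∑ x : X, ∑ g : Gstar G X, piQ G X g.1 * (Amat G X g x * Bmat G X x h)
      = ∑ x : X, (∑ g : Gstar G X, piQ G X g.1 * Amat G X g x) * Bmat G X x h := by
        refine Finset.sum_congr rfl fun x _ => ?_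
        rw [Finset.sum_mul]
        exact Finset.sum_congr rfl fun g _ => (mul_assoc _ _ _).symm
    _ = ∑ x : X, piK G X x * Bmat G X x h := by
        refine Finset.sum_congr rfl fun x _ => by rw [piQ_A G X x]
    _ = piQ G X h.1 := piK_B G X h

lemma piK_stat_pow (t : ℕ) (y : X) :
    ∑ x : X, piK G X x * (Kmat G X ^ t) x y = piK G X y := by
  induction t generalizing y with
  | zero => simp [Matrix.one_apply, mul_ite, Finset.sum_ite_eq]
  | succ t ih =>
    simp only [pow_succ, Matrix.mul_apply, Finset.mul_sum]
    rw [Finset.sum_comm]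
    calc ∑ z : X, ∑ x : X, piK G X x * ((Kmat G X ^ t) x z * Kmat G X z y)
        = ∑ z : X, (∑ x : X, piK G X x * (Kmat G X ^ t) x z) * Kmat G X z y := by
          refine Finset.sum_congr rfl fun z _ => ?_
          rw [Finset.sum_mul]
          exact Finset.sum_congr rfl fun x _ => (mul_assoc _ _ _).symm
      _ = ∑ z : X, piK G X z * Kmat G X z y := by
          refine Finset.sum_congr rfl fun z _ => by rw [ih z]
      _ = piK G X y := piK_stat G X y

lemma piQ_stat_pow (t : ℕ) (h : Gstar G X) :
    ∑ g : Gstar G X, piQ G X g.1 * (Qmat G X ^ t) g h = piQ G X h.1 := by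
  induction t generalizing h with
  | zero => simp [Matrix.one_apply, mul_ite, Finset.sum_ite_eq]
  | succ t ih =>
    simp only [pow_succ, Matrix.mul_apply, Finset.mul_sum]
    rw [Finset.sum_comm]
    calc ∑ k : Gstar G X, ∑ g : Gstar G X, piQ G X g.1 * ((Qmat G X ^ t) g k * Qmat G X k h)
        = ∑ k : Gstar G X, (∑ g : Gstar G X, piQ G X g.1 * (Qmat G X ^ t) g k)
            * Qmat G X k h := by
          refine Finset.sum_congr rfl fun k _ => ?_
          rw [Finset.sum_mul]
          exact Finset.sum_congr rfl fun g _ => (mul_assoc _ _ _).symm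
      _ = ∑ k : Gstar G X, piQ G X k.1 * Qmat G X k h := by
          refine Finset.sum_congr rfl fun k _ => by rw [ih k]
      _ = piQ G X h.1 := piQ_stat G X h

-- ==================== sup lemmas ====================

lemma tvK_le_dK (t : ℕ) (x : X) : tvK G X t x ≤ dK G X t :=
  le_ciSup (Set.Finite.bddAbove (Set.finite_range _)) x

lemma tvQ_le_dQ (t : ℕ) (g : Gstar G X) : tvQ G X t g ≤ dQ G X t :=
  le_ciSup (Set.Finite.bddAbove (Set.finite_range _)) g

lemma dK_le {t : ℕ} {a : ℝ} (h : ∀ x, tvK G X t x ≤ a) : dK G X t ≤ a := ciSup_le h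

lemma dQ_le {t : ℕ} {a : ℝ} (h : ∀ g, tvQ G X t g ≤ a) : dQ G X t ≤ a := ciSup_le h

-- ==================== interlacing ====================

lemma KtB_dev (t : ℕ) (x : X) :
    ∑ h : Gstar G X, |(Kmat G X ^ t * Bmat G X) x h - piQ G X h.1| ≤ 2 * dK G X t := by
  have key : ∀ h : Gstar G X, (Kmat G X ^ t * Bmat G X) x h - piQ G X h.1
      = ∑ y : X, ((Kmat G X ^ t) x y - piK G X y) * Bmat G X y h := by
    intro h
    rw [Matrix.mul_apply, ← piK_B G X h, ← Finset.sum_sub_distrib]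
    exact Finset.sum_congr rfl fun y _ => (sub_mul _ _ _).symm
  calc ∑ h : Gstar G X, |(Kmat G X ^ t * Bmat G X) x h - piQ G X h.1|
      = ∑ h : Gstar G X, |∑ y : X, ((Kmat G X ^ t) x y - piK G X y) * Bmat G X y h| := by
        exact Finset.sum_congr rfl fun h _ => by rw [key h]
    _ ≤ ∑ y : X, |(Kmat G X ^ t) x y - piK G X y| :=
        contract_aux (Bmat G X) (fun y h => B_nonneg G X y h.1)
          (fun y => B_row_sum G X y) _
    _ = 2 * tvK G X t x := by rw [tvK]; ring
    _ ≤ 2 * dK G X t := by linarith [tvK_le_dK G X t x]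

lemma QtA_dev (t : ℕ) (g : Gstar G X) :
    ∑ y : X, |(Qmat G X ^ t * Amat G X) g y - piK G X y| ≤ 2 * dQ G X t := by
  have key : ∀ y : X, (Qmat G X ^ t * Amat G X) g y - piK G X y
      = ∑ h : Gstar G X, ((Qmat G X ^ t) g h - piQ G X h.1) * Amat G X h y := by
    intro y
    rw [Matrix.mul_apply, ← piQ_A G X y, ← Finset.sum_sub_distrib]
    exact Finset.sum_congr rfl fun h _ => (sub_mul _ _ _).symm
  calc ∑ y : X, |(Qmat G X ^ t * Amat G X) g y - piK G X y|
      = ∑ y : X, |∑ h : Gstar G X, ((Qmat G X ^ t) g h - piQ G X h.1) * Amat G X h y| := by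
        exact Finset.sum_congr rfl fun y _ => by rw [key y]
    _ ≤ ∑ h : Gstar G X, |(Qmat G X ^ t) g h - piQ G X h.1| :=
        contract_aux (Amat G X) (fun h y => A_nonneg G X h.1 y)
          (fun h => A_row_sum G X h.2) _
    _ = 2 * tvQ G X t g := by rw [tvQ]; ring
    _ ≤ 2 * dQ G X t := by linarith [tvQ_le_dQ G X t g]

lemma dQ_succ_le (t : ℕ) : dQ G X (t + 1) ≤ dK G X t := by
  refine dQ_le G X fun g => ?_
  have hfac : Qmat G X ^ (t + 1) = Amat G X * (Kmat G X ^ t * Bmat G X) := by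
    rw [Qmat_eq, pow_factor_aux, ← Kmat_eq]
  have hbound : ∑ h : Gstar G X, |(Qmat G X ^ (t+1)) g h - piQ G X h.1| ≤ 2 * dK G X t := by
    simp only [hfac, Matrix.mul_apply]
    exact mix_aux (fun x => Amat G X g x) (fun x => A_nonneg G X g.1 x)
      (A_row_sum G X g.2) (Kmat G X ^ t * Bmat G X) (fun h => piQ G X h.1)
      (2 * dK G X t) (KtB_dev G X t)
  rw [tvQ]
  linarith

lemma dK_succ_le (t : ℕ) : dK G X (t + 1) ≤ dQ G X t := by
  refine dK_le G X fun x => ?_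
  have hfac : Kmat G X ^ (t + 1) = Bmat G X * (Qmat G X ^ t * Amat G X) := by
    rw [Kmat_eq, pow_factor_aux, ← Qmat_eq]
  have hbound : ∑ y : X, |(Kmat G X ^ (t+1)) x y - piK G X y| ≤ 2 * dQ G X t := by
    simp only [hfac, Matrix.mul_apply]
    exact mix_aux (fun h : Gstar G X => Bmat G X x h) (fun h => B_nonneg G X x h.1)
      (B_row_sum G X x) (Qmat G X ^ t * Amat G X) (piK G X)
      (2 * dQ G X t) (QtA_dev G X t)
  rw [tvK]
  linarith

-- ==================== Doeblin contraction for K ====================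

lemma K_pos (x y : X) : 0 < Kmat G X x y := by
  show 0 < K G X x y
  unfold K
  refine Finset.sum_pos (fun g hg => ?_) ⟨1, ?_⟩
  · rw [Finset.mem_inter] at hg
    have h1 : (0:ℝ) < (stab G X x).card := by exact_mod_cast stab_card_pos G X x
    have h2 : (0:ℝ) < (fixedPts G X g).card := by
      exact_mod_cast Finset.card_pos.2 ⟨x, (stab_fixed G X).1 hg.1⟩
    positivity
  · rw [Finset.mem_inter]
    exact ⟨(mem_stab' G X).2 (one_smul G x), (mem_stab' G X).2 (one_smul G y)⟩

lemma K_mixes : ∀ ε : ℝ, 0 < ε → ∃ t : ℕ, dK G X t ≤ ε := by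
  intro ε hε
  obtain ⟨p, -, hp⟩ := Finset.exists_min_image (Finset.univ : Finset (X × X))
    (fun p => Kmat G X p.1 p.2) ⟨(Classical.arbitrary X, Classical.arbitrary X),
      Finset.mem_univ _⟩
  set c : ℝ := Kmat G X p.1 p.2 with hc
  have hc0 : 0 < c := K_pos G X p.1 p.2
  have hcK : ∀ x y : X, c ≤ Kmat G X x y := fun x y => hp (x, y) (Finset.mem_univ _)
  set n : ℕ := Fintype.card X with hn
  have hn0 : 0 < n := Fintype.card_pos
  have hcn : c * n ≤ 1 := by
    have := K_row_sum G X p.1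
    calc c * n = ∑ _y : X, c := by
          rw [Finset.sum_const, nsmul_eq_mul, Finset.card_univ, ← hn]; ring
      _ ≤ ∑ y : X, Kmat G X p.1 y := Finset.sum_le_sum fun y _ => hcK p.1 y
      _ = 1 := K_row_sum G X p.1
  set r : ℝ := 1 - c * n with hr
  have hr0 : 0 ≤ r := by linarith
  have hr1 : r < 1 := by
    have : 0 < c * n := by positivity
    linarith
  have step : ∀ v : X → ℝ, (∑ x, v x = 0) →
      ∑ y, |∑ x, v x * Kmat G X x y| ≤ r * ∑ x, |v x| := by
    intro v hv
    have key : ∀ y, ∑ x, v x * Kmat G X x y = ∑ x, v x * (Kmat G X x y - c) := by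
      intro y
      simp [mul_sub, Finset.sum_sub_distrib, ← Finset.sum_mul, hv]
    calc ∑ y, |∑ x, v x * Kmat G X x y|
        ≤ ∑ y, ∑ x, |v x| * (Kmat G X x y - c) := by
          refine Finset.sum_le_sum fun y _ => ?_
          rw [key y]
          refine (Finset.abs_sum_le_sum_abs _ _).trans (Finset.sum_le_sum fun x _ => ?_)
          rw [abs_mul, abs_of_nonneg (sub_nonneg.2 (hcK x y))]
      _ = ∑ x, |v x| * ∑ y, (Kmat G X x y - c) := by
          rw [Finset.sum_comm]
          exact Finset.sum_congr rfl fun x _ => by rw [← Finset.mul_sum]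
      _ = ∑ x, |v x| * r := by
          refine Finset.sum_congr rfl fun x _ => ?_
          rw [Finset.sum_sub_distrib, K_row_sum G X x, Finset.sum_const, nsmul_eq_mul,
            Finset.card_univ, hr, ← hn]
          ring_nf
      _ = r * ∑ x, |v x| := by rw [← Finset.sum_mul]; ring
  have main : ∀ t : ℕ, ∀ x : X, ∑ y, |(Kmat G X ^ t) x y - piK G X y| ≤ 2 * r ^ t := by
    intro t
    induction t with
    | zero =>
      intro x
      simp only [pow_zero, Matrix.one_apply]
      calc ∑ y, |(if x = y then (1:ℝ) else 0) - piK G X y|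
          ≤ ∑ y, (|if x = y then (1:ℝ) else 0| + |piK G X y|) :=
            Finset.sum_le_sum fun y _ => abs_sub _ _
        _ = (∑ y, |if x = y then (1:ℝ) else 0|) + ∑ y, |piK G X y| :=
            Finset.sum_add_distrib
        _ = 1 + 1 := by
            congr 1
            · simp [apply_ite abs, Finset.sum_ite_eq]
            · rw [Finset.sum_congr rfl fun y _ => abs_of_nonneg (piK_nonneg G X y)]
              exact piK_sum G X
        _ = 2 * 1 := by norm_num
    | succ t ih =>
      intro x
      have hvsum : ∑ z, ((Kmat G X ^ t) x z - piK G X z) = 0 := by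
        rw [Finset.sum_sub_distrib, Kpow_row_sum G X t x, piK_sum G X, sub_self]
      have key : ∀ y, (Kmat G X ^ (t+1)) x y - piK G X y
          = ∑ z, ((Kmat G X ^ t) x z - piK G X z) * Kmat G X z y := by
        intro y
        rw [pow_succ, Matrix.mul_apply, ← piK_stat G X y, ← Finset.sum_sub_distrib]
        exact Finset.sum_congr rfl fun z _ => (sub_mul _ _ _).symm
      calc ∑ y, |(Kmat G X ^ (t+1)) x y - piK G X y|
          = ∑ y, |∑ z, ((Kmat G X ^ t) x z - piK G X z) * Kmat G X z y| :=
            Finset.sum_congr rfl fun y _ => by rw [key y]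
        _ ≤ r * ∑ z, |(Kmat G X ^ t) x z - piK G X z| := step _ hvsum
        _ ≤ r * (2 * r ^ t) := mul_le_mul_of_nonneg_left (ih x) hr0
        _ = 2 * r ^ (t+1) := by ring
  obtain ⟨t, ht⟩ := exists_pow_lt_of_lt_one hε hr1
  refine ⟨t, dK_le G X fun x => ?_⟩
  rw [tvK]
  have := main t x
  have hrt : r ^ t < ε := ht
  linarith


/-- Mixing time equivalence: for every `ε ∈ (0,1)` the mixing times
`t_mix(Q;ε) = min{t : d_Q(t) ≤ ε}` and `t_mix(K;ε) = min{t : d_K(t) ≤ ε}` both exist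
(the chains mix), and they differ by at most one step. -/
theorem mixing_time_equivalence (ε : ℝ) (hε0 : 0 < ε) (hε1 : ε < 1) :
    ∃ tQ tK : ℕ,
      IsLeast {t : ℕ | dQ G X t ≤ ε} tQ ∧
      IsLeast {t : ℕ | dK G X t ≤ ε} tK ∧
      |(tQ : ℤ) - (tK : ℤ)| ≤ 1 := by
  obtain ⟨t0, ht0⟩ := K_mixes G X ε hε0
  have hSK : (Set.Nonempty {t : ℕ | dK G X t ≤ ε}) := ⟨t0, ht0⟩
  have hSQ : (Set.Nonempty {t : ℕ | dQ G X t ≤ ε}) :=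
    ⟨t0 + 1, le_trans (dQ_succ_le G X t0) ht0⟩
  refine ⟨sInf {t : ℕ | dQ G X t ≤ ε}, sInf {t : ℕ | dK G X t ≤ ε},
    ⟨Nat.sInf_mem hSQ, fun t ht => Nat.sInf_le ht⟩,
    ⟨Nat.sInf_mem hSK, fun t ht => Nat.sInf_le ht⟩, ?_⟩
  have h1 : sInf {t : ℕ | dQ G X t ≤ ε} ≤ sInf {t : ℕ | dK G X t ≤ ε} + 1 :=
    Nat.sInf_le (le_trans (dQ_succ_le G X _) (Nat.sInf_mem hSK))
  have h2 : sInf {t : ℕ | dK G X t ≤ ε} ≤ sInf {t : ℕ | dQ G X t ≤ ε} + 1 :=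
    Nat.sInf_le (le_trans (dK_succ_le G X _) (Nat.sInf_mem hSQ))
  rw [abs_le]
  omega

end
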